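/- Let R_extended be the set of tuples (x, y, z, x̃^1, …, x̃^d) ∈ ℝ^η × ℝ × ℝ^d × (ℝ^η)^d such that z ∈ Δ^d, x̃^k ∈ z_k·D_{|k} for each k = 1,…,d, x = Σ_{k=1}^d x̃^k, and y = Σ_{k=1}^d (w^k · x̃^k + b^k z_k). Then: (i) the projection of R_extended onto the (x, y, z)-coordinates equals R_cayley; (ii) the projection onto the (x, y)-coordinates of those points of R_extended with z ∈ {0,1}^d equals S_max; and (iii) every extreme point of R_extended has z ∈ {0,1}^d. -/

import Mathlib

open scoped Pointwise

noncomputable section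

/-- Dot product on `Fin n → ℝ`. -/
def dotp {n : ℕ} (w x : Fin n → ℝ) : ℝ := ∑ i, w i * x i

/-- The affine function `f^k(x) = w^k ⬝ x + b^k`. -/
def affK {η d : ℕ} (w : Fin d → Fin η → ℝ) (b : Fin d → ℝ) (k : Fin d) (x : Fin η → ℝ) : ℝ :=
  dotp (w k) x + b k

/-- `D_{|k}`: the part of the domain where `f^k` attains the maximum. -/
def DrestrK {η d : ℕ} (D : Set (Fin η → ℝ)) (w : Fin d → Fin η → ℝ) (b : Fin d → ℝ)
    (k : Fin d) : Set (Fin η → ℝ) :=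
  {x ∈ D | ∀ ℓ, affK w b ℓ x ≤ affK w b k x}

/-- `S_cayley = ∪_k {(x, f^k(x), e^k) : x ∈ D_{|k}}`. -/
def Scayley {η d : ℕ} (D : Set (Fin η → ℝ)) (w : Fin d → Fin η → ℝ) (b : Fin d → ℝ) :
    Set ((Fin η → ℝ) × ℝ × (Fin d → ℝ)) :=
  ⋃ k, (fun x => (x, affK w b k x, Pi.single k (1 : ℝ))) '' DrestrK D w b k

/-- The Cayley embedding `R_cayley = conv(S_cayley)`. -/
def Rcayley {η d : ℕ} (D : Set (Fin η → ℝ)) (w : Fin d → Fin η → ℝ) (b : Fin d → ℝ) :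
    Set ((Fin η → ℝ) × ℝ × (Fin d → ℝ)) :=
  convexHull ℝ (Scayley D w b)

/-- `S_max = {(x, max_k f^k(x)) : x ∈ D}`. -/
def Smax {η d : ℕ} (hd : 0 < d) (D : Set (Fin η → ℝ)) (w : Fin d → Fin η → ℝ)
    (b : Fin d → ℝ) : Set ((Fin η → ℝ) × ℝ) :=
  {q | q.1 ∈ D ∧
    q.2 = Finset.univ.sup' ⟨⟨0, hd⟩, Finset.mem_univ _⟩ fun k => affK w b k q.1}

lemma dotp_add {n : ℕ} (w x y : Fin n → ℝ) : dotp w (x + y) = dotp w x + dotp w y := by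
  simp [dotp, mul_add, Finset.sum_add_distrib]

lemma dotp_smul {n : ℕ} (w : Fin n → ℝ) (c : ℝ) (x : Fin n → ℝ) :
    dotp w (c • x) = c * dotp w x := by
  simp [dotp, Finset.mul_sum, mul_comm, mul_assoc, mul_left_comm]

lemma dotp_zero {n : ℕ} (w : Fin n → ℝ) : dotp w 0 = 0 := by simp [dotp]

lemma dotp_sub {n : ℕ} (w x y : Fin n → ℝ) : dotp w (x - y) = dotp w x - dotp w y := by
  simp [dotp, mul_sub, Finset.sum_sub_distrib]

lemma dotp_linear {n : ℕ} (w : Fin n → ℝ) : IsLinearMap ℝ (dotp w) :=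
  ⟨fun x y => dotp_add w x y, fun c x => dotp_smul w c x⟩

lemma convex_of_poly {η : ℕ} {D : Set (Fin η → ℝ)}
    (hDpoly : ∃ (m : ℕ) (A : Fin m → Fin η → ℝ) (c : Fin m → ℝ),
      D = {x | ∀ i, dotp (A i) x ≤ c i}) : Convex ℝ D := by
  obtain ⟨m, A, c, rfl⟩ := hDpoly
  have : {x : Fin η → ℝ | ∀ i, dotp (A i) x ≤ c i} = ⋂ i, {x | dotp (A i) x ≤ c i} := by
    ext x; simp
  rw [this]
  exact convex_iInter fun i => convex_halfSpace_le (dotp_linear (A i)) (c i)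

lemma convex_DrestrK {η d : ℕ} {D : Set (Fin η → ℝ)} (hD : Convex ℝ D)
    (w : Fin d → Fin η → ℝ) (b : Fin d → ℝ) (k : Fin d) : Convex ℝ (DrestrK D w b k) := by
  have : DrestrK D w b k = D ∩ ⋂ ℓ, {x | dotp (w ℓ - w k) x ≤ b k - b ℓ} := by
    ext x
    simp only [DrestrK, Set.mem_setOf_eq, Set.mem_inter_iff, Set.mem_iInter, affK]
    constructor
    · rintro ⟨hx, h⟩
      refine ⟨hx, fun ℓ => ?_⟩
      have := h ℓ
      simp only [dotp] at this
      simp only [dotp, Pi.sub_apply, sub_mul, Finset.sum_sub_distrib]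
      linarith
    · rintro ⟨hx, h⟩
      refine ⟨hx, fun ℓ => ?_⟩
      have := h ℓ
      simp only [dotp, Pi.sub_apply, sub_mul, Finset.sum_sub_distrib] at this
      simp only [dotp]
      linarith
  rw [this]
  exact hD.inter (convex_iInter fun ℓ => convex_halfSpace_le (dotp_linear _) _)

lemma DrestrK_nonempty {η d : ℕ} {D : Set (Fin η → ℝ)} {w : Fin d → Fin η → ℝ} {b : Fin d → ℝ}
    (hirr : ∀ k, ∃ x ∈ D, ∀ ℓ, ℓ ≠ k → affK w b ℓ x < affK w b k x) (k : Fin d) :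
    (DrestrK D w b k).Nonempty := by
  obtain ⟨x, hx, h⟩ := hirr k
  refine ⟨x, hx, fun ℓ => ?_⟩
  rcases eq_or_ne ℓ k with rfl | hne
  · exact le_rfl
  · exact (h ℓ hne).le

lemma homog {η : ℕ} {C : Set (Fin η → ℝ)} (hC : Convex ℝ C) {a b z z' : ℝ}
    (ha : 0 ≤ a) (hb : 0 ≤ b) (hz : 0 ≤ z) (hz' : 0 ≤ z')
    {x x' : Fin η → ℝ} (hx : x ∈ z • C) (hx' : x' ∈ z' • C) :
    a • x + b • x' ∈ (a * z + b * z') • C := by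
  obtain ⟨u, hu, rfl⟩ := hx
  obtain ⟨u', hu', rfl⟩ := hx'
  by_cases hs : a * z + b * z' = 0
  · have haz : a * z = 0 := by nlinarith [mul_nonneg ha hz, mul_nonneg hb hz']
    have hbz : b * z' = 0 := by nlinarith [mul_nonneg ha hz, mul_nonneg hb hz']
    refine ⟨u, hu, ?_⟩
    show (a * z + b * z') • u = a • z • u + b • z' • u'
    rw [hs, zero_smul, smul_smul, smul_smul, haz, hbz, zero_smul, zero_smul, add_zero]
  · have hspos : 0 < a * z + b * z' :=
      lt_of_le_of_ne (by positivity) (Ne.symm hs)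
    set s := a * z + b * z' with hsdef
    refine ⟨(a * z / s) • u + (b * z' / s) • u', hC hu hu' (by positivity) (by positivity) ?_, ?_⟩
    · rw [← add_div, div_self hs]
    · show s • ((a * z / s) • u + (b * z' / s) • u') = a • z • u + b • z' • u'
      rw [smul_add, smul_smul, smul_smul, smul_smul, smul_smul]
      rw [mul_div_cancel₀ _ hs, mul_div_cancel₀ _ hs]

section RextConvex

variable {η d : ℕ} {D : Set (Fin η → ℝ)} {w : Fin d → Fin η → ℝ} {b : Fin d → ℝ}

lemma convex_Rext (hD : Convex ℝ D) :
    Convex ℝ {p : (Fin η → ℝ) × ℝ × (Fin d → ℝ) × (Fin d → Fin η → ℝ) |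
      p.2.2.1 ∈ stdSimplex ℝ (Fin d)
      ∧ (∀ k, p.2.2.2 k ∈ p.2.2.1 k • DrestrK D w b k)
      ∧ p.1 = ∑ k, p.2.2.2 k
      ∧ p.2.1 = ∑ k, (dotp (w k) (p.2.2.2 k) + b k * p.2.2.1 k)} := by
  rintro p ⟨hpz, hpk, hpx, hpy⟩ q ⟨hqz, hqk, hqx, hqy⟩ a c ha hc hac
  refine ⟨?_, ?_, ?_, ?_⟩
  · exact convex_stdSimplex ℝ (Fin d) hpz hqz ha hc hac
  · intro k
    show a • p.2.2.2 k + c • q.2.2.2 k ∈ (a * p.2.2.1 k + c * q.2.2.1 k) • DrestrK D w b k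
    exact homog (convex_DrestrK hD w b k) ha hc (hpz.1 k) (hqz.1 k) (hpk k) (hqk k)
  · show a • p.1 + c • q.1 = ∑ k, (a • p.2.2.2 k + c • q.2.2.2 k)
    rw [hpx, hqx, Finset.sum_add_distrib, Finset.smul_sum, Finset.smul_sum]
  · show a • p.2.1 + c • q.2.1
      = ∑ k, (dotp (w k) (a • p.2.2.2 k + c • q.2.2.2 k) + b k * (a * p.2.2.1 k + c * q.2.2.1 k))
    rw [hpy, hqy]
    simp only [smul_eq_mul, Finset.mul_sum, dotp_add, dotp_smul]
    rw [← Finset.sum_add_distrib]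
    congr 1; funext k; ring

end RextConvex

theorem stmt0 {η d : ℕ} (hη : 1 ≤ η) (hd : 1 ≤ d)
    (w : Fin d → Fin η → ℝ) (b : Fin d → ℝ)
    (D : Set (Fin η → ℝ))
    (hDpoly : ∃ (m : ℕ) (A : Fin m → Fin η → ℝ) (c : Fin m → ℝ),
      D = {x | ∀ i, dotp (A i) x ≤ c i})
    (hDne : D.Nonempty) (hDbd : Bornology.IsBounded D)
    (hirr : ∀ k, ∃ x ∈ D, ∀ ℓ, ℓ ≠ k → affK w b ℓ x < affK w b k x)
    (Rext : Set ((Fin η → ℝ) × ℝ × (Fin d → ℝ) × (Fin d → Fin η → ℝ)))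
    (hRext : Rext = {p | p.2.2.1 ∈ stdSimplex ℝ (Fin d)
      ∧ (∀ k, p.2.2.2 k ∈ p.2.2.1 k • DrestrK D w b k)
      ∧ p.1 = ∑ k, p.2.2.2 k
      ∧ p.2.1 = ∑ k, (dotp (w k) (p.2.2.2 k) + b k * p.2.2.1 k)}) :
    -- (i) projection onto (x, y, z) equals R_cayley
    ((fun p : (Fin η → ℝ) × ℝ × (Fin d → ℝ) × (Fin d → Fin η → ℝ) =>
        (p.1, p.2.1, p.2.2.1)) '' Rext = Rcayley D w b)
    -- (ii) projection onto (x, y) of the points with binary z equals S_max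
    ∧ ((fun p : (Fin η → ℝ) × ℝ × (Fin d → ℝ) × (Fin d → Fin η → ℝ) =>
        (p.1, p.2.1)) '' {p ∈ Rext | ∀ k, p.2.2.1 k = 0 ∨ p.2.2.1 k = 1}
        = Smax hd D w b)
    -- (iii) every extreme point of R_extended has binary z
    ∧ (∀ p ∈ Set.extremePoints ℝ Rext, ∀ k, p.2.2.1 k = 0 ∨ p.2.2.1 k = 1) := by
  have hD : Convex ℝ D := convex_of_poly hDpoly
  have hDkne : ∀ k, (DrestrK D w b k).Nonempty := DrestrK_nonempty hirr
  subst hRext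
  -- a generic "lift" of a point of Scayley into Rext
  have hlift : ∀ (k : Fin d) (x : Fin η → ℝ), x ∈ DrestrK D w b k →
      (x, affK w b k x, Pi.single k (1 : ℝ), fun j => if j = k then x else 0) ∈
      {p : (Fin η → ℝ) × ℝ × (Fin d → ℝ) × (Fin d → Fin η → ℝ) |
        p.2.2.1 ∈ stdSimplex ℝ (Fin d)
        ∧ (∀ j, p.2.2.2 j ∈ p.2.2.1 j • DrestrK D w b j)
        ∧ p.1 = ∑ j, p.2.2.2 j
        ∧ p.2.1 = ∑ j, (dotp (w j) (p.2.2.2 j) + b j * p.2.2.1 j)} := by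
    intro k x hx
    refine ⟨⟨fun j => ?_, ?_⟩, fun j => ?_, ?_, ?_⟩
    · by_cases h : j = k <;> simp [Pi.single_apply, h]
    · simp [Finset.sum_pi_single]
    · by_cases h : j = k
      · subst h
        exact ⟨x, hx, by simp⟩
      · obtain ⟨u, hu⟩ := hDkne j
        exact ⟨u, hu, by simp [Pi.single_apply, h]⟩
    · simp [Finset.sum_ite_eq]
    · show affK w b k x = _
      rw [Finset.sum_eq_single k]
      · simp [affK, Pi.single_apply]
      · intro j _ hj
        simp [Pi.single_apply, hj, dotp_zero]
      · intro h; exact absurd (Finset.mem_univ k) h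
  refine ⟨?_, ?_, ?_⟩
  -- Part (i)
  · apply le_antisymm
    · rintro _ ⟨p, ⟨hz, hk, hx, hy⟩, rfl⟩
      have hzs : ∑ j, p.2.2.1 j = 1 := hz.2
      have hch : ∀ j, ∃ u ∈ DrestrK D w b j, p.2.2.1 j • u = p.2.2.2 j := fun j => hk j
      choose u hu hzu using hch
      have key : (p.1, p.2.1, p.2.2.1) =
          Finset.univ.centerMass p.2.2.1
            (fun k => ((u k, affK w b k (u k), Pi.single k (1 : ℝ)) :
              (Fin η → ℝ) × ℝ × (Fin d → ℝ))) := by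
        rw [Finset.centerMass, hzs, inv_one, one_smul]
        refine Prod.ext ?_ (Prod.ext ?_ ?_)
        · rw [Prod.fst_sum]
          simp only [Prod.smul_mk]
          rw [hx]
          exact Finset.sum_congr rfl fun j _ => (hzu j).symm
        · rw [Prod.snd_sum, Prod.fst_sum]
          simp only [Prod.smul_mk, smul_eq_mul]
          rw [hy]
          refine Finset.sum_congr rfl fun j _ => ?_
          rw [← hzu j, dotp_smul, affK]
          ring
        · rw [Prod.snd_sum, Prod.snd_sum]
          funext j
          simp only [Prod.smul_mk, Finset.sum_apply, Pi.smul_apply, Pi.single_apply,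
            smul_eq_mul, mul_ite, mul_one, mul_zero]
          simp [Finset.sum_ite_eq]
      show (p.1, p.2.1, p.2.2.1) ∈ Rcayley D w b
      rw [key]
      refine Finset.centerMass_mem_convexHull _ (fun j _ => hz.1 j) (by rw [hzs]; norm_num)
        (fun j _ => ?_)
      exact Set.mem_iUnion.mpr ⟨j, ⟨u j, hu j, rfl⟩⟩
    · rw [Rcayley]
      apply convexHull_min
      · rintro _ ⟨S, ⟨k, rfl⟩, ⟨x, hx, rfl⟩⟩
        exact ⟨_, hlift k x hx, rfl⟩
      · exact Convex.is_linear_image (convex_Rext hD)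
          ⟨fun p q => rfl, fun c p => rfl⟩
  -- Part (ii)
  · apply le_antisymm
    · rintro _ ⟨p, ⟨⟨hz, hk, hx, hy⟩, hbin⟩, rfl⟩
      have hzs : ∑ j, p.2.2.1 j = 1 := hz.2
      have h1 : ∃ k0, p.2.2.1 k0 = 1 := by
        by_contra h
        push_neg at h
        have : ∀ j ∈ Finset.univ, p.2.2.1 j = 0 := fun j _ => (hbin j).resolve_right (h j)
        rw [Finset.sum_eq_zero this] at hzs
        norm_num at hzs
      obtain ⟨k0, hk0⟩ := h1
      have hrest : ∀ j, j ≠ k0 → p.2.2.1 j = 0 := by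
        intro j hj
        by_contra h
        have hj1 : p.2.2.1 j = 1 := (hbin j).resolve_left h
        have h2 : (2:ℝ) ≤ ∑ j, p.2.2.1 j := by
          have := Finset.add_sum_erase Finset.univ p.2.2.1 (Finset.mem_univ j)
          have hk0' : k0 ∈ Finset.univ.erase j := Finset.mem_erase.mpr ⟨fun h => hj h.symm, Finset.mem_univ _⟩
          have := Finset.single_le_sum (f := p.2.2.1) (fun i _ => hz.1 i) hk0'
          have := Finset.add_sum_erase Finset.univ p.2.2.1 (Finset.mem_univ j)
          linarith [Finset.single_le_sum (f := p.2.2.1) (fun i _ => hz.1 i) hk0',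
            (Finset.add_sum_erase Finset.univ p.2.2.1 (Finset.mem_univ j)).symm]
        rw [hzs] at h2; norm_num at h2
      have hxt0 : ∀ j, j ≠ k0 → p.2.2.2 j = 0 := by
        intro j hj
        obtain ⟨v, hv, hvx⟩ := hk j
        simp only [hrest j hj, zero_smul] at hvx
        exact hvx.symm
      obtain ⟨v, hv, hvx⟩ := hk k0
      simp only [hk0, one_smul] at hvx
      have hx0 : p.1 = v := by
        rw [hx, Finset.sum_eq_single k0]
        · exact hvx.symm
        · exact fun j _ hj => hxt0 j hj
        · intro h; exact absurd (Finset.mem_univ k0) h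
      have hy0 : p.2.1 = affK w b k0 v := by
        rw [hy, Finset.sum_eq_single k0]
        · rw [hvx, hk0, affK, mul_one]
        · intro j _ hj
          rw [hxt0 j hj, hrest j hj, dotp_zero, mul_zero, add_zero]
        · intro h; exact absurd (Finset.mem_univ k0) h
      show (p.1, p.2.1) ∈ Smax hd D w b
      refine ⟨by show p.1 ∈ D; rw [hx0]; exact hv.1, ?_⟩
      show p.2.1 = Finset.univ.sup' _ fun k => affK w b k p.1
      rw [hy0, hx0]
      refine le_antisymm ?_ ?_
      · exact Finset.le_sup' (f := fun j => affK w b j v) (Finset.mem_univ k0)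
      · exact Finset.sup'_le _ _ fun j _ => hv.2 j
    · rintro ⟨x, y⟩ ⟨hxD, hy⟩
      simp only at hxD hy
      obtain ⟨k0, _, hk0⟩ := Finset.exists_mem_eq_sup'
        (⟨⟨0, hd⟩, Finset.mem_univ _⟩ : Finset.Nonempty Finset.univ)
        (fun k => affK w b k x)
      have hxk0 : x ∈ DrestrK D w b k0 := by
        refine ⟨hxD, fun ℓ => ?_⟩
        rw [← hk0]
        exact Finset.le_sup' (f := fun j => affK w b j x) (Finset.mem_univ ℓ)
      refine ⟨(x, affK w b k0 x, Pi.single k0 (1 : ℝ), fun j => if j = k0 then x else 0),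
        ⟨hlift k0 x hxk0, fun k => ?_⟩, ?_⟩
      · by_cases h : k = k0 <;> simp [Pi.single_apply, h]
      · show (x, affK w b k0 x) = (x, y)
        rw [Prod.mk.injEq]
        refine ⟨rfl, ?_⟩
        rw [hy, hk0]
  -- Part (iii)
  · intro p hp k
    by_contra hk
    push_neg at hk
    rw [mem_extremePoints] at hp
    obtain ⟨⟨hz, hxt, hx, hy⟩, hext⟩ := hp
    set z := p.2.2.1 with hzdef
    have hzk0 : 0 < z k := lt_of_le_of_ne (hz.1 k) (Ne.symm hk.1)
    have hzs : ∑ j, z j = 1 := hz.2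
    have hex : ∃ ℓ, ℓ ≠ k ∧ 0 < z ℓ := by
      by_contra h
      push_neg at h
      have : ∑ j, z j = z k := by
        rw [Finset.sum_eq_single k]
        · intro j _ hj
          exact le_antisymm (h j hj) (hz.1 j)
        · intro h'; exact absurd (Finset.mem_univ k) h'
      rw [hzs] at this
      exact hk.2 this.symm
    obtain ⟨ℓ, hlk, hzl0⟩ := hex
    set ε := min (z k) (z ℓ) / 2 with hεdef
    have hε : 0 < ε := by positivity
    have hεk : ε ≤ z k := by
      rw [hεdef]
      have := min_le_left (z k) (z ℓ); linarith
    have hεl : ε ≤ z ℓ := by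
      rw [hεdef]
      have := min_le_right (z k) (z ℓ); linarith
    set s : Fin d → ℝ := Pi.single k ε + Pi.single ℓ (-ε) with hsdef
    have hsk : s k = ε := by
      simp [hsdef, Pi.single_apply, hlk.symm, (Ne.symm hlk)]
    have hsl : s ℓ = -ε := by
      simp [hsdef, Pi.single_apply, hlk]
    have hsother : ∀ j, j ≠ k → j ≠ ℓ → s j = 0 := by
      intro j h1 h2
      simp [hsdef, Pi.single_apply, h1, h2]
    have hssum : ∑ j, s j = 0 := by
      simp [hsdef, Finset.sum_add_distrib, Finset.sum_pi_single]
    have hsz : ∀ j, s j ≠ 0 → 0 < z j := by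
      intro j hj
      rcases eq_or_ne j k with rfl | h1
      · exact hzk0
      rcases eq_or_ne j ℓ with rfl | h2
      · exact hzl0
      · exact absurd (hsother j h1 h2) hj
    have hbound : ∀ j, |s j| ≤ z j ∨ s j = 0 := by
      intro j
      rcases eq_or_ne j k with rfl | h1
      · left; rw [hsk, abs_of_pos hε]; exact hεk
      rcases eq_or_ne j ℓ with rfl | h2
      · left; rw [hsl, abs_neg, abs_of_pos hε]; exact hεl
      · right; exact hsother j h1 h2
    -- the two perturbed points
    set xt := p.2.2.2 with hxtdef
    set xp : Fin d → Fin η → ℝ := fun j => xt j + (s j / z j) • xt j with hxpdef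
    set xm : Fin d → Fin η → ℝ := fun j => xt j - (s j / z j) • xt j with hxmdef
    have hmemp : ∀ (σ : ℝ), |σ| = 1 → ∀ j,
        xt j + σ • (s j / z j) • xt j ∈ (z j + σ * s j) • DrestrK D w b j := by
      intro σ hσ j
      obtain ⟨u, hu, huj⟩ := hxt j
      by_cases h0 : s j = 0
      · rw [h0, zero_div, zero_smul, smul_zero, add_zero, mul_zero, add_zero]
        exact ⟨u, hu, huj⟩
      · have hzj : z j ≠ 0 := ne_of_gt (hsz j h0)
        refine ⟨u, hu, ?_⟩
        rw [← huj]
        show (z j + σ * s j) • u = z j • u + σ • (s j / z j) • z j • u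
        rw [smul_smul, smul_smul, mul_assoc, div_mul_cancel₀ _ hzj, add_smul]
    have hnneg : ∀ (σ : ℝ), |σ| = 1 → ∀ j, 0 ≤ z j + σ * s j := by
      intro σ hσ j
      rcases hbound j with h | h
      · have h1 : σ * s j ≤ |s j| := by
          calc σ * s j ≤ |σ * s j| := le_abs_self _
          _ = |σ| * |s j| := abs_mul _ _
          _ = |s j| := by rw [hσ, one_mul]
        have h2 : -|s j| ≤ σ * s j := by
          have := neg_abs_le (σ * s j)
          have : |σ * s j| = |s j| := by rw [abs_mul, hσ, one_mul]
          linarith [neg_abs_le (σ * s j)]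
        linarith
      · rw [h, mul_zero, add_zero]; exact hz.1 j
    have hsum1 : ∀ (σ : ℝ), ∑ j, (z j + σ * s j) = 1 := by
      intro σ
      rw [Finset.sum_add_distrib, hzs, ← Finset.mul_sum, hssum, mul_zero, add_zero]
    set xp : Fin d → Fin η → ℝ := fun j => xt j + (s j / z j) • xt j with hxpdef
    set xm : Fin d → Fin η → ℝ := fun j => xt j - (s j / z j) • xt j with hxmdef
    set zp : Fin d → ℝ := fun j => z j + s j with hzpdef
    set zm : Fin d → ℝ := fun j => z j - s j with hzmdef
    set pp : (Fin η → ℝ) × ℝ × (Fin d → ℝ) × (Fin d → Fin η → ℝ) :=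
      (∑ j, xp j, ∑ j, (dotp (w j) (xp j) + b j * zp j), zp, xp) with hppdef
    set pm : (Fin η → ℝ) × ℝ × (Fin d → ℝ) × (Fin d → Fin η → ℝ) :=
      (∑ j, xm j, ∑ j, (dotp (w j) (xm j) + b j * zm j), zm, xm) with hpmdef
    have hppR : pp ∈ {p : (Fin η → ℝ) × ℝ × (Fin d → ℝ) × (Fin d → Fin η → ℝ) |
        p.2.2.1 ∈ stdSimplex ℝ (Fin d)
        ∧ (∀ k, p.2.2.2 k ∈ p.2.2.1 k • DrestrK D w b k)
        ∧ p.1 = ∑ k, p.2.2.2 k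
        ∧ p.2.1 = ∑ k, (dotp (w k) (p.2.2.2 k) + b k * p.2.2.1 k)} := by
      refine ⟨⟨fun j => ?_, ?_⟩, fun j => ?_, rfl, rfl⟩
      · have := hnneg 1 (by norm_num) j
        simpa [hzpdef] using this
      · have := hsum1 1
        simpa [hzpdef] using this
      · have := hmemp 1 (by norm_num) j
        simpa [hxpdef, hzpdef] using this
    have hpmR : pm ∈ {p : (Fin η → ℝ) × ℝ × (Fin d → ℝ) × (Fin d → Fin η → ℝ) |
        p.2.2.1 ∈ stdSimplex ℝ (Fin d)
        ∧ (∀ k, p.2.2.2 k ∈ p.2.2.1 k • DrestrK D w b k)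
        ∧ p.1 = ∑ k, p.2.2.2 k
        ∧ p.2.1 = ∑ k, (dotp (w k) (p.2.2.2 k) + b k * p.2.2.1 k)} := by
      refine ⟨⟨fun j => ?_, ?_⟩, fun j => ?_, rfl, rfl⟩
      · have := hnneg (-1) (by norm_num) j
        show 0 ≤ z j - s j; linarith
      · have := hsum1 (-1)
        show ∑ j, (z j - s j) = 1; simpa [hzmdef, sub_eq_add_neg] using this
      · have := hmemp (-1) (by norm_num) j
        show xt j - (s j / z j) • xt j ∈ (z j - s j) • DrestrK D w b j
        simpa [hxmdef, hzmdef, sub_eq_add_neg] using this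
    have hseg : p ∈ openSegment ℝ pp pm := by
      refine ⟨1/2, 1/2, by norm_num, by norm_num, by norm_num, ?_⟩
      refine Prod.ext ?_ (Prod.ext ?_ (Prod.ext ?_ ?_))
      · show (1/2 : ℝ) • (∑ j, xp j) + (1/2 : ℝ) • (∑ j, xm j) = p.1
        rw [Finset.smul_sum, Finset.smul_sum]
        rw [← Finset.sum_add_distrib]
        rw [hx]
        refine Finset.sum_congr rfl fun j _ => ?_
        show (1/2 : ℝ) • xp j + (1/2 : ℝ) • xm j = xt j
        rw [hxpdef, hxmdef]
        module
      · show (1/2 : ℝ) • (∑ j, (dotp (w j) (xp j) + b j * zp j))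
            + (1/2 : ℝ) • (∑ j, (dotp (w j) (xm j) + b j * zm j)) = p.2.1
        rw [hy]
        simp only [smul_eq_mul, Finset.mul_sum]
        rw [← Finset.sum_add_distrib]
        refine Finset.sum_congr rfl fun j _ => ?_
        simp only [hxpdef, hxmdef, hzpdef, hzmdef, dotp_add, dotp_sub, dotp_smul, smul_eq_mul]
        ring
      · show (1/2 : ℝ) • zp + (1/2 : ℝ) • zm = p.2.2.1
        funext j
        simp only [Pi.add_apply, Pi.smul_apply, hzpdef, hzmdef, smul_eq_mul]
        ring
      · show (1/2 : ℝ) • xp + (1/2 : ℝ) • xm = p.2.2.2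
        funext j
        show (1/2 : ℝ) • xp j + (1/2 : ℝ) • xm j = xt j
        rw [hxpdef, hxmdef]
        module
    obtain ⟨hpeq, -⟩ := hext pp hppR pm hpmR hseg
    have : zp k = z k := congrFun (congrArg (fun q => q.2.2.1) hpeq) k
    rw [hzpdef] at this
    simp only [hsk] at this
    have : ε = 0 := by linarith [this]
    exact absurd this (ne_of_gt hε)
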